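/- Let U = (u,v) ∈ C¹ up to the closed unit disk be harmonic in B with det DU > 0 on ∂B, let Φ = U|∂B, let ũ be the harmonic conjugate of u, and f = u + i·ũ. Then the winding numbers of the boundary curves coincide: WN(f(∂B)) = WN(Φ(∂B)). -/

import Mathlib

open Complex Metric Set MeasureTheory Filter

noncomputable def pd2 (u : ℂ → ℝ) (w z : ℂ) : ℝ :=
  fderiv ℝ (fun x => fderiv ℝ u x w) z w

def HarmOn (u : ℂ → ℝ) (s : Set ℂ) : Prop :=
  ContDiffOn ℝ 2 u s ∧ ∀ z ∈ s, pd2 u 1 z + pd2 u Complex.I z = 0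

def HarmMapOn (U : ℂ → ℂ) (s : Set ℂ) : Prop :=
  HarmOn (fun z => (U z).re) s ∧ HarmOn (fun z => (U z).im) s

noncomputable def jacDet (U : ℂ → ℂ) (z : ℂ) : ℝ :=
  LinearMap.det ((fderivWithin ℝ U (closedBall (0:ℂ) 1) z) : ℂ →ₗ[ℝ] ℂ)

noncomputable def jacDetB (U : ℂ → ℂ) (z : ℂ) : ℝ :=
  LinearMap.det ((fderiv ℝ U z) : ℂ →ₗ[ℝ] ℂ)

def IsHomeoOnto (U : ℂ → ℂ) (s t : Set ℂ) : Prop :=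
  ∃ h : s ≃ₜ t, ∀ z : s, (h z : ℂ) = U (z : ℂ)

def IsDiffeoOnto (U : ℂ → ℂ) (t : Set ℂ) : Prop :=
  ContDiffOn ℝ 1 U (closedBall (0:ℂ) 1) ∧ IsHomeoOnto U (closedBall (0:ℂ) 1) t ∧
    ∀ z ∈ closedBall (0:ℂ) 1, jacDet U z ≠ 0

def WindsOnce (c : ℝ → ℂ) (w : ℂ) : Prop :=
  ∃ a : ℝ → ℝ, Continuous a ∧
    (∀ θ : ℝ, c θ - w = (‖c θ - w‖ : ℂ) * Complex.exp ((a θ : ℂ) * Complex.I)) ∧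
    a (2 * Real.pi) = a 0 + 2 * Real.pi

def TangentWinding (c : ℝ → ℂ) (n : ℤ) : Prop :=
  ∃ a : ℝ → ℝ, Continuous a ∧
    (∀ θ : ℝ, deriv c θ = (‖deriv c θ‖ : ℂ) * Complex.exp ((a θ : ℂ) * Complex.I)) ∧
    a (2 * Real.pi) = a 0 + (n : ℝ) * (2 * Real.pi)

def VanishOrder (f : ℂ → ℂ) (z : ℂ) (n : ℕ) : Prop :=
  ∃ h : ℂ → ℂ, AnalyticAt ℂ h z ∧ h z ≠ 0 ∧ ∀ᶠ w in nhds z, f w = (w - z) ^ n * h w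

noncomputable def gradC (u : ℂ → ℝ) (z : ℂ) : ℂ :=
  (fderiv ℝ u z 1 : ℂ) - (fderiv ℝ u z Complex.I : ℂ) * Complex.I

def CritSum (u : ℂ → ℝ) (M : ℕ) : Prop :=
  ∃ (S : Finset ℂ) (m : ℂ → ℕ),
    (↑S : Set ℂ) = {z | z ∈ ball (0:ℂ) 1 ∧ fderiv ℝ u z = 0} ∧
    (∀ z ∈ S, VanishOrder (gradC u) z (m z)) ∧ ∑ z ∈ S, m z = M

def LocalHomeoAt (U : ℂ → ℂ) (P : ℂ) : Prop :=
  ∃ G ∈ nhds P, Set.InjOn U (G ∩ closedBall (0:ℂ) 1)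

def IsConjOn (u v : ℂ → ℝ) (s : Set ℂ) : Prop :=
  DifferentiableOn ℝ v s ∧ ∀ z ∈ s,
    fderiv ℝ v z 1 = -(fderiv ℝ u z Complex.I) ∧ fderiv ℝ v z Complex.I = fderiv ℝ u z 1

def HilbertPV (g : ℝ → ℝ) (θ L : ℝ) : Prop :=
  Tendsto (fun ε : ℝ =>
      (1 / (2 * Real.pi)) *
        ∫ τ in Ioo (θ - Real.pi) (θ + Real.pi) \ Ioo (θ - ε) (θ + ε),
          g τ / Real.tan ((θ - τ) / 2))
    (nhdsWithin 0 (Ioi 0)) (nhds L)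

noncomputable def wderivZ (U : ℂ → ℂ) (z : ℂ) : ℂ :=
  (fderivWithin ℝ U (closedBall (0:ℂ) 1) z 1 -
    Complex.I * fderivWithin ℝ U (closedBall (0:ℂ) 1) z Complex.I) / 2

noncomputable def wderivZbar (U : ℂ → ℂ) (z : ℂ) : ℂ :=
  (fderivWithin ℝ U (closedBall (0:ℂ) 1) z 1 +
    Complex.I * fderivWithin ℝ U (closedBall (0:ℂ) 1) z Complex.I) / 2

noncomputable def angDeriv (u : ℂ → ℝ) (τ : ℝ) : ℝ :=
  fderivWithin ℝ u (closedBall (0:ℂ) 1) (Complex.exp ((τ : ℂ) * Complex.I))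
    (Complex.I * Complex.exp ((τ : ℂ) * Complex.I))

noncomputable def radDeriv (u : ℂ → ℝ) (θ : ℝ) : ℝ :=
  fderivWithin ℝ u (closedBall (0:ℂ) 1) (Complex.exp ((θ : ℂ) * Complex.I))
    (Complex.exp ((θ : ℂ) * Complex.I))


lemma lift_diff_int (c : ℝ → ℂ) (a b : ℝ → ℝ)
    (hc : ∀ θ, c θ ≠ 0)
    (ha : ∀ θ, c θ = (‖c θ‖ : ℂ) * Complex.exp ((a θ : ℂ) * Complex.I))
    (hb : ∀ θ, c θ = (‖c θ‖ : ℂ) * Complex.exp ((b θ : ℂ) * Complex.I)) :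
    ∀ θ, ∃ k : ℤ, a θ - b θ = k * (2 * Real.pi) := by
  intro θ
  have habs : (‖c θ‖ : ℂ) ≠ 0 := by
    simpa using (norm_ne_zero_iff.mpr (hc θ))
  have h1 : Complex.exp ((a θ : ℂ) * Complex.I) = Complex.exp ((b θ : ℂ) * Complex.I) :=
    mul_left_cancel₀ habs ((ha θ).symm.trans (hb θ))
  have h2 : Complex.exp (((a θ : ℂ) - b θ) * Complex.I) = 1 := by
    rw [sub_mul, Complex.exp_sub, h1, div_self (Complex.exp_ne_zero _)]
  obtain ⟨k, hk⟩ := Complex.exp_eq_one_iff.mp h2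
  refine ⟨k, ?_⟩
  have hI : (Complex.I : ℂ) ≠ 0 := Complex.I_ne_zero
  have : ((a θ : ℂ) - b θ) = k * (2 * Real.pi) := by
    have hk' : ((a θ : ℂ) - b θ) * Complex.I = ((k : ℂ) * (2 * Real.pi)) * Complex.I := by
      rw [hk]; ring
    exact mul_right_cancel₀ hI hk'
  exact_mod_cast this

lemma increment_unique (c : ℝ → ℂ) (a b : ℝ → ℝ)
    (hc : ∀ θ, c θ ≠ 0) (hca : Continuous a) (hcb : Continuous b)
    (ha : ∀ θ, c θ = (‖c θ‖ : ℂ) * Complex.exp ((a θ : ℂ) * Complex.I))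
    (hb : ∀ θ, c θ = (‖c θ‖ : ℂ) * Complex.exp ((b θ : ℂ) * Complex.I)) :
    a (2 * Real.pi) - a 0 = b (2 * Real.pi) - b 0 := by
  set d := fun θ => a θ - b θ with hd
  have hdc : Continuous d := hca.sub hcb
  have hk : ∀ θ, ∃ k : ℤ, d θ = k * (2 * Real.pi) := lift_diff_int c a b hc ha hb
  have key : d (2 * Real.pi) = d 0 := by
    obtain ⟨k0, hk0⟩ := hk 0
    obtain ⟨k2, hk2⟩ := hk (2 * Real.pi)
    rcases lt_trichotomy (d 0) (d (2 * Real.pi)) with h | h | h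
    · exfalso
      have hpi : (0:ℝ) < Real.pi := Real.pi_pos
      have hmem : d 0 + Real.pi ∈ Icc (d 0) (d (2*Real.pi)) := by
        constructor
        · linarith
        · -- d 2π - d 0 = (k2 - k0) * 2π ≥ 2π
          have : (k0:ℝ) < k2 := by nlinarith
          have : (k0:ℝ) + 1 ≤ k2 := by exact_mod_cast Int.add_one_le_iff.mpr (by exact_mod_cast this)
          nlinarith
      have two_pi_pos : (0:ℝ) ≤ 2 * Real.pi := by positivity
      obtain ⟨τ, _, hτ⟩ := intermediate_value_Icc two_pi_pos (hdc.continuousOn) hmem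
      obtain ⟨kτ, hkτ⟩ := hk τ
      rw [hkτ, hk0] at hτ
      have : (2*kτ : ℝ) = 2*k0 + 1 := by nlinarith
      have : (2*kτ : ℤ) = 2*k0 + 1 := by exact_mod_cast this
      omega
    · exact h.symm
    · exfalso
      have hpi : (0:ℝ) < Real.pi := Real.pi_pos
      have hmem : d 0 - Real.pi ∈ Icc (d (2*Real.pi)) (d 0) := by
        constructor
        · have : (k2:ℝ) < k0 := by nlinarith
          have : (k2:ℝ) + 1 ≤ k0 := by exact_mod_cast Int.add_one_le_iff.mpr (by exact_mod_cast this)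
          nlinarith
        · linarith
      have two_pi_pos : (0:ℝ) ≤ 2 * Real.pi := by positivity
      obtain ⟨τ, _, hτ⟩ := intermediate_value_Icc' two_pi_pos (hdc.continuousOn) hmem
      obtain ⟨kτ, hkτ⟩ := hk τ
      rw [hkτ, hk0] at hτ
      have : (2*kτ : ℝ) = 2*k0 - 1 := by nlinarith
      have : (2*kτ : ℤ) = 2*k0 - 1 := by exact_mod_cast this
      omega
  have : a (2*Real.pi) - b (2*Real.pi) = a 0 - b 0 := key
  linarith


lemma lift_step (c₁ c₂ : ℝ → ℂ) (a : ℝ → ℝ)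
    (h₁ : ∀ θ, c₁ θ ≠ 0)
    (hclose : ∀ θ, ‖c₂ θ - c₁ θ‖ < ‖c₁ θ‖)
    (hc₁ : Continuous c₁) (hc₂ : Continuous c₂)
    (hper₁ : ∀ θ, c₁ (θ + 2*Real.pi) = c₁ θ) (hper₂ : ∀ θ, c₂ (θ + 2*Real.pi) = c₂ θ)
    (hca : Continuous a)
    (ha : ∀ θ, c₁ θ = (‖c₁ θ‖ : ℂ) * Complex.exp ((a θ : ℂ) * Complex.I)) :
    ∃ b : ℝ → ℝ, Continuous b ∧
      (∀ θ, c₂ θ = (‖c₂ θ‖ : ℂ) * Complex.exp ((b θ : ℂ) * Complex.I)) ∧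
      b (2*Real.pi) - b 0 = a (2*Real.pi) - a 0 := by
  set q : ℝ → ℂ := fun θ => c₂ θ / c₁ θ with hq
  have h₂ : ∀ θ, c₂ θ ≠ 0 := by
    intro θ h
    have h' := hclose θ
    rw [h, zero_sub, norm_neg] at h'
    exact lt_irrefl _ h'
  have hqre : ∀ θ, 0 < (q θ).re := by
    intro θ
    have h1 : ‖q θ - 1‖ < 1 := by
      have he : q θ - 1 = (c₂ θ - c₁ θ) / c₁ θ := by
        rw [hq, div_sub_one (h₁ θ)]
      rw [he, norm_div, div_lt_one (by simpa using norm_pos_iff.mpr (h₁ θ))]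
      exact hclose θ
    nlinarith [Complex.sq_norm (q θ - 1), Complex.normSq_apply (q θ - 1),
      sq_nonneg ((q θ - 1).im), norm_nonneg (q θ - 1),
      Complex.sub_re (q θ) 1, Complex.one_re]
  have hqslit : ∀ θ, q θ ∈ Complex.slitPlane := fun θ => Or.inl (hqre θ)
  have hqcont : Continuous q := hc₂.div hc₁ h₁
  have hqne : ∀ θ, q θ ≠ 0 := fun θ => div_ne_zero (h₂ θ) (h₁ θ)
  set b : ℝ → ℝ := fun θ => a θ + (Complex.log (q θ)).im with hb
  have hexp : ∀ θ, Complex.exp ((((Complex.log (q θ)).im : ℂ)) * Complex.I)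
      = q θ / (‖q θ‖ : ℂ) := by
    intro θ
    have h3 : (((Complex.log (q θ)).im : ℂ)) * Complex.I
        = Complex.log (q θ) - ((Complex.log (q θ)).re : ℂ) := by
      linear_combination Complex.re_add_im (Complex.log (q θ))
    rw [h3, Complex.exp_sub, Complex.exp_log (hqne θ), Complex.log_re,
      ← Complex.ofReal_exp, Real.exp_log (norm_pos_iff.mpr (hqne θ))]
  refine ⟨b, hca.add (Complex.continuous_im.comp (hqcont.clog hqslit)), ?_, ?_⟩
  · intro θ
    have e1 : Complex.exp ((a θ : ℂ) * Complex.I)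
        = c₁ θ / (‖c₁ θ‖ : ℂ) := by
      rw [eq_div_iff (by simpa using norm_ne_zero_iff.mpr (h₁ θ))]
      rw [mul_comm]; exact (ha θ).symm
    have e2 : ((b θ : ℝ) : ℂ) * Complex.I
        = (a θ : ℂ) * Complex.I + (((Complex.log (q θ)).im : ℂ)) * Complex.I := by
      push_cast [hb]; ring
    rw [e2, Complex.exp_add, e1, hexp θ]
    have hqabs : (‖q θ‖ : ℂ) = (‖c₂ θ‖ : ℂ) / (‖c₁ θ‖ : ℂ) := by
      rw [hq]; push_cast [norm_div]; ring
    rw [hqabs, hq]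
    have hA : (‖c₁ θ‖ : ℂ) ≠ 0 := by simpa using norm_ne_zero_iff.mpr (h₁ θ)
    have hB : (‖c₂ θ‖ : ℂ) ≠ 0 := by simpa using norm_ne_zero_iff.mpr (h₂ θ)
    field_simp [hA, hB, h₁ θ]
  · have hq0 : q (2*Real.pi) = q 0 := by
      have := hper₁ 0; have := hper₂ 0
      simp only [hq, zero_add] at *
      rw [show (2*Real.pi) = 0 + 2*Real.pi by ring, hper₁ 0, hper₂ 0]
    simp only [hb, hq0]; ring


lemma homotopy_winding (P Q : ℝ → ℂ) (m n : ℤ)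
    (hPc : Continuous P) (hQc : Continuous Q)
    (hPper : ∀ θ, P (θ + 2*Real.pi) = P θ) (hQper : ∀ θ, Q (θ + 2*Real.pi) = Q θ)
    (hne : ∀ t : ℝ, 0 ≤ t → t ≤ 1 → ∀ θ, P θ + (t:ℂ) * (Q θ - P θ) ≠ 0)
    (ha : ∃ a : ℝ → ℝ, Continuous a ∧
      (∀ θ, P θ = (‖P θ‖ : ℂ) * Complex.exp ((a θ : ℂ) * Complex.I)) ∧
      a (2*Real.pi) = a 0 + (m:ℝ) * (2*Real.pi))
    (hbb : ∃ b : ℝ → ℝ, Continuous b ∧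
      (∀ θ, Q θ = (‖Q θ‖ : ℂ) * Complex.exp ((b θ : ℂ) * Complex.I)) ∧
      b (2*Real.pi) = b 0 + (n:ℝ) * (2*Real.pi)) :
    m = n := by
  set G : ℝ → ℝ → ℂ := fun t θ => P θ + (t:ℂ) * (Q θ - P θ) with hG
  have hGc : ∀ t, Continuous (G t) := fun t => hPc.add (continuous_const.mul (hQc.sub hPc))
  have hGper : ∀ t θ, G t (θ + 2*Real.pi) = G t θ := by
    intro t θ; simp only [hG, hPper, hQper]
  -- minimum of |G| on the compact set
  set g : ℝ × ℝ → ℝ := fun p => ‖G p.2 p.1‖ with hg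
  have hgc : Continuous g := by
    apply continuous_norm.comp
    exact (hPc.comp continuous_fst).add
      (((Complex.continuous_ofReal.comp continuous_snd)).mul
        ((hQc.comp continuous_fst).sub (hPc.comp continuous_fst)))
  have h2pi : (0:ℝ) ≤ 2 * Real.pi := by positivity
  set K : Set (ℝ × ℝ) := Icc (0:ℝ) (2*Real.pi) ×ˢ Icc (0:ℝ) 1 with hK
  have hKc : IsCompact K := isCompact_Icc.prod isCompact_Icc
  have hKne : K.Nonempty := ⟨(0,0), ⟨⟨le_refl _, h2pi⟩, ⟨le_refl _, zero_le_one⟩⟩⟩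
  obtain ⟨p₀, hp₀, hmin⟩ := hKc.exists_isMinOn hKne hgc.continuousOn
  set ε : ℝ := g p₀ with hε
  have hεpos : 0 < ε := by
    have := hne p₀.2 hp₀.2.1 hp₀.2.2 p₀.1
    exact norm_pos_iff.mpr this
  have hlow : ∀ t : ℝ, 0 ≤ t → t ≤ 1 → ∀ θ, ε ≤ ‖G t θ‖ := by
    intro t ht0 ht1 θ
    have hper : Function.Periodic (fun θ => ‖G t θ‖) (2*Real.pi) := by
      intro x; simp only [hGper]
    obtain ⟨θ', hθ', heq⟩ := hper.exists_mem_Ico₀ (by positivity) θ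
    rw [heq]
    exact isMinOn_iff.mp hmin (θ', t) ⟨Ico_subset_Icc_self hθ', ⟨ht0, ht1⟩⟩
  -- maximum of |Q - P|
  obtain ⟨θc, _, hmax⟩ := (isCompact_Icc (a := (0:ℝ)) (b := 2*Real.pi)).exists_isMaxOn
    ⟨0, ⟨le_refl _, h2pi⟩⟩ (continuous_norm.comp (hQc.sub hPc)).continuousOn
  set C : ℝ := ‖Q θc - P θc‖ with hC
  have hCbound : ∀ θ, ‖Q θ - P θ‖ ≤ C := by
    intro θ
    have hper : Function.Periodic (fun θ => ‖Q θ - P θ‖) (2*Real.pi) := by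
      intro x; simp only [hPper, hQper]
    obtain ⟨θ', hθ', heq⟩ := hper.exists_mem_Ico₀ (by positivity) θ
    rw [heq]
    exact isMaxOn_iff.mp hmax θ' (Ico_subset_Icc_self hθ')
  obtain ⟨N, hN⟩ := exists_nat_gt (C / ε)
  have hC0 : 0 ≤ C := norm_nonneg _
  have hN0 : 0 < (N:ℝ) := lt_of_le_of_lt (div_nonneg hC0 hεpos.le) hN
  have hCN : C < ε * N := by
    rw [div_lt_iff₀ hεpos] at hN
    linarith
  -- induction up the homotopy
  have main : ∀ k : ℕ, k ≤ N → ∃ a : ℝ → ℝ, Continuous a ∧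
      (∀ θ, G ((k:ℝ)/N) θ =
        (‖G ((k:ℝ)/N) θ‖ : ℂ) * Complex.exp ((a θ : ℂ) * Complex.I)) ∧
      a (2*Real.pi) - a 0 = (m:ℝ) * (2*Real.pi) := by
    intro k hk
    induction k with
    | zero =>
      obtain ⟨a, hac, half, hainc⟩ := ha
      refine ⟨a, hac, ?_, by linarith⟩
      intro θ
      simp only [hG]
      push_cast
      simp only [Nat.cast_zero, zero_div, Complex.ofReal_zero, zero_mul, add_zero]
      exact half θ
    | succ k ih =>
      obtain ⟨a, hac, half, hainc⟩ := ih (Nat.le_of_succ_le hk)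
      set t : ℝ := (k:ℝ)/N with ht
      set t' : ℝ := ((k+1:ℕ):ℝ)/N with ht'
      have ht0 : 0 ≤ t := by positivity
      have ht1 : t ≤ 1 := by
        rw [ht, div_le_one hN0]
        exact_mod_cast Nat.le_of_succ_le hk
      have ht'0 : 0 ≤ t' := by positivity
      have ht'1 : t' ≤ 1 := by
        rw [ht', div_le_one hN0]
        exact_mod_cast hk
      have hclose : ∀ θ, ‖G t' θ - G t θ‖ < ‖G t θ‖ := by
        intro θ
        have hdiff : G t' θ - G t θ = ((t' - t : ℝ) : ℂ) * (Q θ - P θ) := by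
          simp only [hG]; push_cast; ring
        have htt : t' - t = 1 / N := by
          rw [ht, ht']; push_cast; field_simp; ring
        rw [hdiff, norm_mul, Complex.norm_real, Real.norm_eq_abs, htt, abs_of_pos (by positivity)]
        calc 1/(N:ℝ) * ‖Q θ - P θ‖ ≤ 1/N * C := by
              apply mul_le_mul_of_nonneg_left (hCbound θ) (by positivity)
          _ < ε := by
              rw [div_mul_eq_mul_div, one_mul, div_lt_iff₀ hN0]
              linarith [hCN]
          _ ≤ ‖G t θ‖ := hlow t ht0 ht1 θ
      obtain ⟨b, hbc, hblift, hbinc⟩ := lift_step (G t) (G t') a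
        (hne t ht0 ht1) hclose (hGc t) (hGc t') (hGper t) (hGper t') hac half
      exact ⟨b, hbc, hblift, by rw [hbinc]; exact hainc⟩
  obtain ⟨a, hac, half, hainc⟩ := main N (le_refl N)
  obtain ⟨b, hbc, hblift, hbinc⟩ := hbb
  have hGQ : ∀ θ, G ((N:ℝ)/N) θ = Q θ := by
    intro θ
    have : ((N:ℝ)/N : ℝ) = 1 := div_self hN0.ne'
    rw [this]; simp only [hG]; push_cast; ring
  have half' : ∀ θ, Q θ = (‖Q θ‖ : ℂ) * Complex.exp ((a θ : ℂ) * Complex.I) := by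
    intro θ; rw [← hGQ θ]; exact half θ
  have hQne : ∀ θ, Q θ ≠ 0 := by
    intro θ; rw [← hGQ θ]
    exact hne _ (by positivity) (by rw [div_self hN0.ne']) θ
  have := increment_unique Q a b hQne hac hbc half' hblift
  have h2 : (m:ℝ) * (2*Real.pi) = (n:ℝ) * (2*Real.pi) := by
    rw [← hainc, this, hbinc]; ring
  have h3 : (m:ℝ) = (n:ℝ) :=
    mul_right_cancel₀ (by positivity : (0:ℝ) < 2*Real.pi).ne' h2
  exact_mod_cast h3


lemma clm_decomp {F : Type*} [NormedAddCommGroup F] [NormedSpace ℝ F]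
    (L : ℂ →L[ℝ] F) (v : ℂ) : L v = v.re • L 1 + v.im • L Complex.I := by
  have hv : v = v.re • (1:ℂ) + v.im • Complex.I := by
    simp [Complex.real_smul, Complex.re_add_im]
  conv_lhs => rw [hv]
  rw [map_add, _root_.map_smul, _root_.map_smul]

lemma jac_formula (L : ℂ →L[ℝ] ℂ) :
    LinearMap.det (L : ℂ →ₗ[ℝ] ℂ)
      = (L 1).re * (L Complex.I).im - (L 1).im * (L Complex.I).re := by
  rw [← LinearMap.det_toMatrix Complex.basisOneI, Matrix.det_fin_two]
  simp [LinearMap.toMatrix_apply, Complex.basisOneI]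
  ring

section MainProof

variable (U : ℂ → ℂ) (uConj : ℂ → ℝ) (f : ℂ → ℂ)

theorem winding_main
    (hU1 : ContDiffOn ℝ 1 U (closedBall (0:ℂ) 1))
    (hjac : ∀ z ∈ sphere (0:ℂ) 1, 0 < LinearMap.det
      ((fderivWithin ℝ U (closedBall (0:ℂ) 1) z : ℂ →L[ℝ] ℂ) : ℂ →ₗ[ℝ] ℂ))
    (huConj1 : ContDiffOn ℝ 1 uConj (closedBall (0:ℂ) 1))
    (hconjd : DifferentiableOn ℝ uConj (ball (0:ℂ) 1))
    (hconj : ∀ z ∈ ball (0:ℂ) 1,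
      fderiv ℝ uConj z 1 = -(fderiv ℝ (fun z => (U z).re) z Complex.I) ∧
      fderiv ℝ uConj z Complex.I = fderiv ℝ (fun z => (U z).re) z 1)
    (hf : ∀ z, f z = (((U z).re : ℝ) : ℂ) + (uConj z : ℂ) * Complex.I) :
    ∀ m n : ℤ,
      (∃ a : ℝ → ℝ, Continuous a ∧
        (∀ θ : ℝ, deriv (fun θ : ℝ => f (Complex.exp ((θ:ℂ) * Complex.I))) θ =
          (‖deriv (fun θ : ℝ => f (Complex.exp ((θ:ℂ) * Complex.I))) θ‖ : ℂ) *
            Complex.exp ((a θ : ℂ) * Complex.I)) ∧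
        a (2 * Real.pi) = a 0 + (m : ℝ) * (2 * Real.pi)) →
      (∃ b : ℝ → ℝ, Continuous b ∧
        (∀ θ : ℝ, deriv (fun θ : ℝ => U (Complex.exp ((θ:ℂ) * Complex.I))) θ =
          (‖deriv (fun θ : ℝ => U (Complex.exp ((θ:ℂ) * Complex.I))) θ‖ : ℂ) *
            Complex.exp ((b θ : ℂ) * Complex.I)) ∧
        b (2 * Real.pi) = b 0 + (n : ℝ) * (2 * Real.pi)) →
      m = n := by
  intro m n hm hn
  have hUD : UniqueDiffOn ℝ (closedBall (0:ℂ) 1) :=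
    uniqueDiffOn_convex (convex_closedBall _ _)
      (by rw [interior_closedBall (0:ℂ) one_ne_zero]; exact ⟨0, by simp⟩)
  set e : ℝ → ℂ := fun θ => Complex.exp ((θ:ℂ) * Complex.I) with he
  have hecB : ∀ θ, e θ ∈ closedBall (0:ℂ) 1 := fun θ => by
    simp [he, Complex.norm_exp]
  have hesph : ∀ θ, e θ ∈ sphere (0:ℂ) 1 := fun θ => by
    simp [he, Complex.norm_exp]
  have heper : ∀ θ, e (θ + 2*Real.pi) = e θ := by
    intro θ
    simp only [he]
    push_cast
    rw [add_mul, Complex.exp_add, Complex.exp_two_pi_mul_I, mul_one]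
  have hede : ∀ θ, HasDerivAt e (Complex.I * e θ) θ := by
    intro θ
    have h1 : HasDerivAt (fun θ : ℝ => (θ:ℂ) * Complex.I) Complex.I θ := by
      simpa using (Complex.ofRealCLM.hasDerivAt (x := θ)).mul_const Complex.I
    simpa [he, mul_comm] using h1.cexp
  have hec : Continuous e := by
    apply Complex.continuous_exp.comp
    exact Complex.continuous_ofReal.mul continuous_const
  set DU : ℂ → (ℂ →L[ℝ] ℂ) := fun z => fderivWithin ℝ U (closedBall (0:ℂ) 1) z with hDUdef
  set DW : ℂ → (ℂ →L[ℝ] ℝ) := fun z => fderivWithin ℝ uConj (closedBall (0:ℂ) 1) z with hDWdef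
  have hDU : ∀ z ∈ closedBall (0:ℂ) 1, HasFDerivWithinAt U (DU z) (closedBall (0:ℂ) 1) z :=
    fun z hz => ((hU1.differentiableOn one_ne_zero) z hz).hasFDerivWithinAt
  have hDW : ∀ z ∈ closedBall (0:ℂ) 1, HasFDerivWithinAt uConj (DW z) (closedBall (0:ℂ) 1) z :=
    fun z hz => ((huConj1.differentiableOn one_ne_zero) z hz).hasFDerivWithinAt
  have hDUc : ContinuousOn DU (closedBall (0:ℂ) 1) :=
    hU1.continuousOn_fderivWithin hUD le_rfl
  have hDWc : ContinuousOn DW (closedBall (0:ℂ) 1) :=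
    huConj1.continuousOn_fderivWithin hUD le_rfl
  -- interior identities
  have hball : ∀ z ∈ ball (0:ℂ) 1, (closedBall (0:ℂ) 1) ∈ nhds z := fun z hz =>
    Filter.mem_of_superset (isOpen_ball.mem_nhds hz) ball_subset_closedBall
  have hUdiff : ∀ z ∈ ball (0:ℂ) 1, DifferentiableAt ℝ U z := fun z hz =>
    ((hU1.differentiableOn one_ne_zero) z (ball_subset_closedBall hz)).differentiableAt (hball z hz)
  have hure : ∀ z ∈ ball (0:ℂ) 1, ∀ x : ℂ,
      fderiv ℝ (fun z => (U z).re) z x = (fderiv ℝ U z x).re := by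
    intro z hz x
    have h : HasFDerivAt (fun z => (U z).re) (Complex.reCLM.comp (fderiv ℝ U z)) z :=
      Complex.reCLM.hasFDerivAt.comp z (hUdiff z hz).hasFDerivAt
    rw [h.fderiv]; rfl
  -- CR relations extended to the closed ball
  have hdens : ∀ g : ℂ → ℝ, ContinuousOn g (closedBall (0:ℂ) 1) →
      (∀ z ∈ ball (0:ℂ) 1, g z = 0) → ∀ z ∈ closedBall (0:ℂ) 1, g z = 0 := by
    intro g hc h0 z hz
    have hcl : z ∈ closure (ball (0:ℂ) 1) := by
      rw [closure_ball (0:ℂ) one_ne_zero]; exact hz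
    haveI : (nhdsWithin z (ball (0:ℂ) 1)).NeBot := mem_closure_iff_nhdsWithin_neBot.mp hcl
    have h1 : Tendsto g (nhdsWithin z (ball (0:ℂ) 1)) (nhds (g z)) :=
      (hc z hz).mono_left (nhdsWithin_mono z ball_subset_closedBall)
    have h2 : Tendsto g (nhdsWithin z (ball (0:ℂ) 1)) (nhds 0) := by
      apply Tendsto.congr' _ tendsto_const_nhds
      filter_upwards [self_mem_nhdsWithin] with x hx
      exact (h0 x hx).symm
    exact tendsto_nhds_unique h1 h2
  have hWin : ∀ z ∈ ball (0:ℂ) 1, DW z = fderiv ℝ uConj z := by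
    intro z hz
    rw [hDWdef]
    exact fderivWithin_of_mem_nhds (hball z hz)
  have hUin : ∀ z ∈ ball (0:ℂ) 1, DU z = fderiv ℝ U z := by
    intro z hz
    rw [hDUdef]
    exact fderivWithin_of_mem_nhds (hball z hz)
  have hCR1 : ∀ z ∈ closedBall (0:ℂ) 1, DW z 1 + (DU z Complex.I).re = 0 := by
    apply hdens
    · exact (hDWc.clm_apply continuousOn_const).add
        (Complex.continuous_re.comp_continuousOn (hDUc.clm_apply continuousOn_const))
    · intro z hz
      rw [hWin z hz, hUin z hz, (hconj z hz).1, ← hure z hz]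
      ring
  have hCR2 : ∀ z ∈ closedBall (0:ℂ) 1, DW z Complex.I - (DU z 1).re = 0 := by
    apply hdens
    · exact (hDWc.clm_apply continuousOn_const).sub
        (Complex.continuous_re.comp_continuousOn (hDUc.clm_apply continuousOn_const))
    · intro z hz
      rw [hWin z hz, hUin z hz, (hconj z hz).2, ← hure z hz]
      ring
  -- derivative of the boundary curves
  have hQd : ∀ θ, HasDerivAt (fun θ => U (e θ)) (DU (e θ) (Complex.I * e θ)) θ := by
    intro θ
    have h1 := (hDU (e θ) (hecB θ)).comp_hasDerivWithinAt θ
      ((hede θ).hasDerivWithinAt (s := univ)) (fun x _ => hecB x)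
    rw [hasDerivWithinAt_univ] at h1
    exact h1
  have hud : ∀ θ, HasDerivAt (fun θ => (U (e θ)).re) ((DU (e θ) (Complex.I * e θ)).re) θ := by
    intro θ
    have hcomp : HasFDerivWithinAt (fun z => (U z).re) (Complex.reCLM.comp (DU (e θ)))
        (closedBall (0:ℂ) 1) (e θ) :=
      Complex.reCLM.hasFDerivAt.comp_hasFDerivWithinAt (e θ) (hDU (e θ) (hecB θ))
    have h1 := hcomp.comp_hasDerivWithinAt θ
      ((hede θ).hasDerivWithinAt (s := univ)) (fun x _ => hecB x)
    rw [hasDerivWithinAt_univ] at h1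
    exact h1
  have hwd : ∀ θ, HasDerivAt (fun θ => uConj (e θ)) (DW (e θ) (Complex.I * e θ)) θ := by
    intro θ
    have h1 := (hDW (e θ) (hecB θ)).comp_hasDerivWithinAt θ
      ((hede θ).hasDerivWithinAt (s := univ)) (fun x _ => hecB x)
    rw [hasDerivWithinAt_univ] at h1
    exact h1
  set P : ℝ → ℂ := fun θ =>
    (((DU (e θ) (Complex.I * e θ)).re : ℝ) : ℂ)
      + ((DW (e θ) (Complex.I * e θ) : ℝ) : ℂ) * Complex.I with hP
  set Q : ℝ → ℂ := fun θ => DU (e θ) (Complex.I * e θ) with hQ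
  have hfd : ∀ θ, HasDerivAt (fun θ => f (e θ)) (P θ) θ := by
    intro θ
    have hfe : (fun θ => f (e θ))
        = fun θ => ((((U (e θ)).re : ℝ)) : ℂ) + ((uConj (e θ) : ℝ) : ℂ) * Complex.I :=
      funext fun θ => hf (e θ)
    rw [hfe, hP]
    exact ((hud θ).ofReal_comp).add (((hwd θ).ofReal_comp).mul_const Complex.I)
  have hderivP : ∀ θ, deriv (fun θ => f (e θ)) θ = P θ := fun θ => (hfd θ).deriv
  have hderivQ : ∀ θ, deriv (fun θ => U (e θ)) θ = Q θ := fun θ => (hQd θ).deriv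
  -- continuity of P and Q
  have hDUe : Continuous fun θ => DU (e θ) := hDUc.comp_continuous hec hecB
  have hDWe : Continuous fun θ => DW (e θ) := hDWc.comp_continuous hec hecB
  have hT : Continuous fun θ => Complex.I * e θ := continuous_const.mul hec
  have hQc : Continuous Q := hDUe.clm_apply hT
  have hPc : Continuous P := by
    apply Continuous.add
    · exact Complex.continuous_ofReal.comp (Complex.continuous_re.comp hQc)
    · exact (Complex.continuous_ofReal.comp (hDWe.clm_apply hT)).mul continuous_const
  -- periodicity
  have hPper : ∀ θ, P (θ + 2*Real.pi) = P θ := by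
    intro θ; simp only [hP, heper]
  have hQper : ∀ θ, Q (θ + 2*Real.pi) = Q θ := by
    intro θ; simp only [hQ, heper]
  -- nonvanishing of the homotopy
  have hne : ∀ t : ℝ, 0 ≤ t → t ≤ 1 → ∀ θ, P θ + (t:ℂ) * (Q θ - P θ) ≠ 0 := by
    intro t ht0 ht1 θ hcontra
    set z := e θ with hz
    set A := DU z with hA
    set T := Complex.I * z with hTd
    have hz1 : z.re^2 + z.im^2 = 1 := by
      have h1 : ‖z‖ = 1 := by simpa using hesph θ
      have h2 := Complex.sq_norm z
      rw [h1, Complex.normSq_apply] at h2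
      nlinarith [h2]
    have hTre : T.re = -z.im := by simp [hTd]
    have hTim : T.im = z.re := by simp [hTd]
    set α := (A T).re with hα
    set γ := (A T).im with hγ
    set β := DW z T with hβ
    set ρ := (A z).re with hρ
    set δ := (A z).im with hδ
    have hcr1 := hCR1 z (hecB θ)
    have hcr2 := hCR2 z (hecB θ)
    -- β = ρ
    have hβρ : β = ρ := by
      have h1 : β = T.re * DW z 1 + T.im * DW z Complex.I := by
        rw [hβ, clm_decomp (DW z) T]; simp [smul_eq_mul]
      have h2 : ρ = z.re * (A 1).re + z.im * (A Complex.I).re := by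
        rw [hρ, clm_decomp A z]
        simp [Complex.add_re, Complex.real_smul, Complex.mul_re]
      rw [h1, h2, hTre, hTim]
      have e1 : DW z 1 = -(A Complex.I).re := by linarith [hcr1]
      have e2 : DW z Complex.I = (A 1).re := by linarith [hcr2]
      rw [e1, e2]; ring
    -- component expansions
    have hαe : α = -z.im * (A 1).re + z.re * (A Complex.I).re := by
      rw [hα, clm_decomp A T, hTre, hTim]
      simp [Complex.add_re, Complex.real_smul, Complex.mul_re]
    have hγe : γ = -z.im * (A 1).im + z.re * (A Complex.I).im := by
      rw [hγ, clm_decomp A T, hTre, hTim]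
      simp [Complex.add_im, Complex.real_smul, Complex.mul_im]
    have hρe : ρ = z.re * (A 1).re + z.im * (A Complex.I).re := by
      rw [hρ, clm_decomp A z]
      simp [Complex.add_re, Complex.real_smul, Complex.mul_re]
    have hδe : δ = z.re * (A 1).im + z.im * (A Complex.I).im := by
      rw [hδ, clm_decomp A z]
      simp [Complex.add_im, Complex.real_smul, Complex.mul_im]
    -- Jacobian
    have hjz : 0 < (A 1).re * (A Complex.I).im - (A 1).im * (A Complex.I).re := by
      have := hjac z (hesph θ)
      rwa [show fderivWithin ℝ U (closedBall (0:ℂ) 1) z = A from rfl, jac_formula A] at this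
    have hrot : ρ * γ - α * δ
        = (z.re^2 + z.im^2) * ((A 1).re * (A Complex.I).im - (A 1).im * (A Complex.I).re) := by
      rw [hαe, hγe, hρe, hδe]; ring
    -- components of the vanishing point
    have hre : α + t * (α - α) = 0 := by
      have := congrArg Complex.re hcontra
      simpa [hP, hQ, Complex.add_re, Complex.mul_re, Complex.sub_re, Complex.ofReal_re,
        Complex.ofReal_im, ← hz, ← hA, ← hTd, ← hα, ← hβ] using this
    have him : β + t * (γ - β) = 0 := by
      have := congrArg Complex.im hcontra
      simpa [hP, hQ, Complex.add_im, Complex.mul_im, Complex.sub_im, Complex.ofReal_re,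
        Complex.ofReal_im, ← hz, ← hA, ← hTd, ← hγ, ← hβ] using this
    have hα0 : α = 0 := by linarith [hre]
    have hργ : 0 < ρ * γ := by
      have : ρ * γ - α * δ = (z.re^2 + z.im^2) * _ := hrot
      rw [hz1, one_mul] at hrot
      rw [hα0] at hrot
      linarith [hjz, hrot]
    rw [hβρ] at him
    -- (1-t) ρ² + t ρ γ = 0
    have e1 : (1-t) * ρ^2 + t * (ρ * γ) = 0 := by linear_combination ρ * him
    have e2 : 0 ≤ (1-t) * ρ^2 := mul_nonneg (by linarith) (sq_nonneg ρ)
    have e3 : 0 ≤ t * (ρ * γ) := mul_nonneg ht0 hργ.le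
    have e4 : t * (ρ * γ) = 0 := by linarith
    have ht0' : t = 0 := by
      rcases mul_eq_zero.mp e4 with h | h
      · exact h
      · exact absurd h hργ.ne'
    rw [ht0'] at him
    have hρ0 : ρ = 0 := by linarith [him]
    rw [hρ0] at hργ
    simp at hργ
  -- conclude
  obtain ⟨a, hac, half, hainc⟩ := hm
  obtain ⟨b, hbc, hblift, hbinc⟩ := hn
  apply homotopy_winding P Q m n hPc hQc hPper hQper hne
  · exact ⟨a, hac, fun θ => by rw [← hderivP θ]; exact half θ, hainc⟩
  · exact ⟨b, hbc, fun θ => by rw [← hderivQ θ]; exact hblift θ, hbinc⟩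

end MainProof


/-- The winding number of `f(∂B)` equals that of `Φ(∂B) = U(∂B)`. -/
theorem winding_f_eq_winding_Phi (U : ℂ → ℂ) (uConj : ℂ → ℝ) (f : ℂ → ℂ)
    (hU1 : ContDiffOn ℝ 1 U (closedBall (0:ℂ) 1))
    (hharm : HarmMapOn U (ball (0:ℂ) 1))
    (hjac : ∀ z ∈ sphere (0:ℂ) 1, 0 < jacDet U z)
    (huConj1 : ContDiffOn ℝ 1 uConj (closedBall (0:ℂ) 1))
    (hconj : IsConjOn (fun z => (U z).re) uConj (ball (0:ℂ) 1))
    (hf : ∀ z, f z = (((U z).re : ℝ) : ℂ) + (uConj z : ℂ) * Complex.I) :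
    ∀ m n : ℤ,
      TangentWinding (fun θ : ℝ => f (Complex.exp ((θ : ℂ) * Complex.I))) m →
      TangentWinding (fun θ : ℝ => U (Complex.exp ((θ : ℂ) * Complex.I))) n →
      m = n := by
  intro m n hm hn
  obtain ⟨hcd, hcr⟩ := hconj
  exact winding_main U uConj f hU1 (fun z hz => hjac z hz) huConj1 hcd hcr hf m n hm hn
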